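/- The function y(t) = (1-t)^β on [0,1] belongs to C^{0,β}[0,1] for β ∈ (0,1), but its Caputo derivative of order β at t = 1, namely D^β y(1) = (β/Γ(1-β))·∫₀¹ (y(1)-y(s))/(1-s)^{1+β} ds + (1/Γ(1-β))·(y(1)-y(0)), fails to exist because the integral ∫₀¹ (1-s)^{β}·(1-s)^{-1-β} ds = ∫₀¹ (1-s)^{-1} ds diverges. -/

import Mathlib

open Real Set MeasureTheory

private lemma rpow_sub_rpow_le_aux {a b p : ℝ} (hb : 0 ≤ b) (hab : b ≤ a)
    (hp : 0 ≤ p) (hp1 : p ≤ 1) : a ^ p - b ^ p ≤ (a - b) ^ p := by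
  have h := NNReal.rpow_add_le_add_rpow (a - b).toNNReal b.toNNReal hp hp1
  have h' := NNReal.coe_le_coe.2 h
  have hab' : 0 ≤ a - b := sub_nonneg.2 hab
  push_cast [NNReal.coe_rpow, Real.coe_toNNReal _ hab', Real.coe_toNNReal _ hb,
    ← Real.toNNReal_add hab' hb] at h'
  rw [Real.coe_toNNReal _ (by linarith : (0:ℝ) ≤ a - b + b)] at h'
  have : a - b + b = a := by ring
  rw [this] at h'
  linarith

private lemma holder_aux {a b p : ℝ} (ha : 0 ≤ a) (hb : 0 ≤ b) (hp : 0 ≤ p) (hp1 : p ≤ 1) :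
    |a ^ p - b ^ p| ≤ |a - b| ^ p := by
  rcases le_total b a with h | h
  · rw [abs_of_nonneg (sub_nonneg.2 (Real.rpow_le_rpow hb h hp)),
      abs_of_nonneg (sub_nonneg.2 h)]
    exact rpow_sub_rpow_le_aux hb h hp hp1
  · rw [abs_sub_comm, abs_of_nonneg (sub_nonneg.2 (Real.rpow_le_rpow ha h hp)),
      abs_sub_comm, abs_of_nonneg (sub_nonneg.2 h)]
    exact rpow_sub_rpow_le_aux ha h hp hp1

theorem holder_function_without_caputo (β : ℝ) (hβ : β ∈ Ioo (0:ℝ) 1) :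
    (∀ s ∈ Icc (0:ℝ) 1, ∀ t ∈ Icc (0:ℝ) 1,
        |(1 - t) ^ β - (1 - s) ^ β| ≤ |t - s| ^ β) ∧
    ¬ IntervalIntegrable
        (fun s : ℝ => ((1 - (1:ℝ)) ^ β - (1 - s) ^ β) / (1 - s) ^ (1 + β))
        volume 0 1 ∧
    ¬ IntervalIntegrable (fun s : ℝ => (1 - s)⁻¹) volume 0 1 := by
  obtain ⟨hβ0, hβ1⟩ := hβ
  have hinv : ¬ IntervalIntegrable (fun s : ℝ => (1 - s)⁻¹) volume 0 1 := by
    intro h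
    have h2 : IntervalIntegrable (fun s : ℝ => (s - 1)⁻¹) volume 0 1 := by
      have := h.neg
      refine this.congr_ae (Filter.Eventually.of_forall fun x => ?_)
      simp [← inv_neg, neg_sub]
    rw [intervalIntegrable_sub_inv_iff] at h2
    rcases h2 with h2 | h2
    · norm_num at h2
    · exact h2 (by rw [uIcc_of_le (by norm_num : (0:ℝ) ≤ 1)]; exact ⟨by norm_num, le_refl 1⟩)
  refine ⟨?_, ?_, hinv⟩
  · intro s hs t ht
    have h := holder_aux (by linarith [ht.2] : (0:ℝ) ≤ 1 - t)
      (by linarith [hs.2] : (0:ℝ) ≤ 1 - s) hβ0.le hβ1.le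
    have : |1 - t - (1 - s)| = |t - s| := by rw [abs_sub_comm]; ring_nf
    rwa [this] at h
  · intro h
    apply hinv
    have key : ∀ x ∈ uIoc (0:ℝ) 1,
        ((1 - (1:ℝ)) ^ β - (1 - x) ^ β) / (1 - x) ^ (1 + β) = -(1 - x)⁻¹ := by
      intro x hx
      rw [uIoc_of_le (by norm_num : (0:ℝ) ≤ 1)] at hx
      rcases eq_or_lt_of_le hx.2 with h1 | h1
      · subst h1; simp [Real.zero_rpow hβ0.ne', Real.zero_rpow (by linarith : (1:ℝ) + β ≠ 0)]
      · have hx1 : (0:ℝ) < 1 - x := by linarith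
        rw [sub_self, Real.zero_rpow hβ0.ne', zero_sub, neg_div, ← Real.rpow_sub hx1,
          (by ring : β - (1 + β) = -1), Real.rpow_neg_one]
    have hneg : IntervalIntegrable (fun s : ℝ => -(1 - s)⁻¹) volume 0 1 :=
      h.congr_ae ((ae_restrict_iff' measurableSet_uIoc).2 (Filter.Eventually.of_forall key))
    exact hneg.neg.congr_ae (Filter.Eventually.of_forall fun x => by simp)
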